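/- Let n ≥ 2 be an integer and let c_1, …, c_{2n−1} be as defined. Then for all real numbers p, q with 0 ≤ p and |q| ≤ p: p^{2n} + Σ_{k=1}^{2n−1} c_k·p^{2n−k}·q^k + (−1)^n·q^{2n}/(2n+1) ≤ ((2 − c_1)/2)·p^{2n}. -/

import Mathlib

open Finset

/-- The coefficients `c_k`, `k = 1, …, 2n−1`, of the auxiliary function `h`:
`c₁ = 1/2 + Σ_{j=1}^{n+1} (−1)^{j+1}·((2j−3)/(2(2j−1)))·C(n+1,j)`;
`c_{2m} = Σ_{j=m+1}^{n+1} (−1)^{j+1}·((2j−2m−1)/(2j−1))·C(n+1,j)` for `m = 1,…,n−1`;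
`c_{2m−1} = Σ_{j=m+1}^{n+1} (−1)^{j+1}·((2j−2m)/(2j−1))·C(n+1,j)` for `m = 2,…,n`. -/
noncomputable def gmchC (n k : ℕ) : ℝ :=
  if k = 1 then
    1 / 2 + ∑ j ∈ Finset.Icc 1 (n + 1),
      (-1 : ℝ) ^ (j + 1) * ((2 * (j : ℝ) - 3) / (2 * (2 * (j : ℝ) - 1))) * ((n + 1).choose j : ℝ)
  else
    ∑ j ∈ Finset.Icc ((k + 1) / 2 + 1) (n + 1),
      (-1 : ℝ) ^ (j + 1) * ((2 * (j : ℝ) - ((k : ℝ) + 1)) / (2 * (j : ℝ) - 1)) *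
        ((n + 1).choose j : ℝ)


noncomputable def gIp (n : ℕ) (s : ℝ) : ℝ :=
  ∑ i ∈ range (n+1), (-1:ℝ)^i * (n.choose i : ℝ) * s^(2*i+1) / (2*(i:ℝ)+1)

noncomputable def gB (n : ℕ) (s : ℝ) : ℝ :=
  ((n:ℝ)+1) * ((1+s^2) * gIp n 1 - 2*s*gIp n s) - (1-s^2)^(n+1)

lemma binom_x (N : ℕ) (x : ℝ) :
    ∑ j ∈ range (N+1), (N.choose j : ℝ) * (-x)^j = (1-x)^N := by
  have h := add_pow (-x) 1 N
  simp only [one_pow, mul_one] at h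
  rw [show (1:ℝ) - x = -x + 1 by ring, h]
  exact Finset.sum_congr rfl fun j _ => by ring

lemma hasDerivAt_gIp (n : ℕ) (s : ℝ) :
    HasDerivAt (gIp n) ((1-s^2)^n) s := by
  have h : HasDerivAt (gIp n)
      (∑ i ∈ range (n+1), (-1:ℝ)^i * (n.choose i : ℝ) * s^(2*i)) s := by
    have := HasDerivAt.fun_sum (u := range (n+1))
      (A := fun i (t:ℝ) => (-1:ℝ)^i * (n.choose i : ℝ) * t^(2*i+1) / (2*(i:ℝ)+1))
      (A' := fun i => (-1:ℝ)^i * (n.choose i : ℝ) * s^(2*i))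
      (fun i _ => by
        have hp := (hasDerivAt_pow (2*i+1) s).const_mul
          ((-1:ℝ)^i * (n.choose i : ℝ) / (2*(i:ℝ)+1))
        have : ((-1:ℝ)^i * (n.choose i : ℝ) / (2*(i:ℝ)+1)) * (↑(2*i+1) * s^(2*i+1-1))
            = (-1:ℝ)^i * (n.choose i : ℝ) * s^(2*i) := by
          have h1 : (2*(i:ℝ)+1) ≠ 0 := by positivity
          push_cast
          field_simp
        rw [this] at hp
        convert! hp using 2 with t
        ring)
    exact this
  convert h using 1
  rw [← binom_x n (s^2)]
  exact Finset.sum_congr rfl fun i _ => by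
    rw [show ((-(s^2))^i : ℝ) = (-1)^i * (s^2)^i by rw [neg_pow], pow_mul]
    ring

lemma gIp_zero (n : ℕ) : gIp n 0 = 0 := by
  unfold gIp
  refine Finset.sum_eq_zero fun i _ => by
    rw [zero_pow (by omega : 2*i+1 ≠ 0)]; ring

lemma key_ineq (n : ℕ) {s : ℝ} (hs0 : 0 ≤ s) (hs1 : s ≤ 1) :
    s * gIp n 1 ≤ gIp n s := by
  have hdiff : ∀ t : ℝ, DifferentiableAt ℝ (gIp n) t :=
    fun t => (hasDerivAt_gIp n t).differentiableAt
  have hderiv : ∀ t : ℝ, deriv (gIp n) t = (1-t^2)^n :=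
    fun t => (hasDerivAt_gIp n t).deriv
  have hconc : ConcaveOn ℝ (Set.Icc (0:ℝ) 1) (gIp n) := by
    apply AntitoneOn.concaveOn_of_deriv (convex_Icc 0 1)
      (fun t _ => (hdiff t).continuousAt.continuousWithinAt)
      (fun t _ => (hdiff t).differentiableWithinAt)
    intro a ha b hb hab
    rw [interior_Icc] at ha hb
    rw [hderiv a, hderiv b]
    apply pow_le_pow_left₀
    · nlinarith [hb.1, hb.2]
    · nlinarith [ha.1, hb.1]
  have h := hconc.2 (Set.mem_Icc.mpr ⟨le_refl 0, zero_le_one⟩)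
    (Set.mem_Icc.mpr ⟨zero_le_one, le_refl 1⟩)
    (by linarith : (0:ℝ) ≤ 1 - s) hs0 (by ring)
  simp only [smul_eq_mul, mul_zero, gIp_zero, mul_one, zero_add, mul_zero, add_zero] at h
  linarith [h]

lemma hasDerivAt_gB (n : ℕ) (s : ℝ) :
    HasDerivAt (gB n) (2*((n:ℝ)+1)*(s * gIp n 1 - gIp n s)) s := by
  have h1 : HasDerivAt (fun t : ℝ => (1-t^2)^(n+1))
      ((↑(n+1):ℝ) * (1-s^2)^n * (-(2*s))) s := by
    have hin : HasDerivAt (fun t : ℝ => 1 - t^2) (-(2*s)) s := by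
      have := (hasDerivAt_pow 2 s).const_sub 1
      simpa using this
    have := hin.fun_pow (n+1)
    convert! this using 1
  have h2 : HasDerivAt (fun t : ℝ => (1+t^2) * gIp n 1) (2*s * gIp n 1) s := by
    have := ((hasDerivAt_pow 2 s).const_add 1).mul_const (gIp n 1)
    convert! this using 1
    norm_num
  have h3 : HasDerivAt (fun t : ℝ => 2*t*gIp n t)
      (2 * gIp n s + 2*s*(1-s^2)^n) s := by
    have := ((hasDerivAt_id s).const_mul 2).fun_mul (hasDerivAt_gIp n s)
    simp only [id_eq] at this
    convert! this using 1
    norm_num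
  have := (((h2.sub h3).const_mul ((n:ℝ)+1)).sub h1)
  convert! this using 1
  push_cast; ring

lemma gB_one (n : ℕ) : gB n 1 = 0 := by
  unfold gB
  rw [show (1:ℝ) - 1^2 = 0 by ring, zero_pow (by omega : n+1 ≠ 0)]
  ring

lemma gB_nonneg (n : ℕ) {s : ℝ} (hs0 : 0 ≤ s) (hs1 : s ≤ 1) : 0 ≤ gB n s := by
  have hanti : AntitoneOn (gB n) (Set.Icc (0:ℝ) 1) := by
    apply antitoneOn_of_deriv_nonpos (convex_Icc 0 1)
      (fun t _ => (hasDerivAt_gB n t).differentiableAt.continuousAt.continuousWithinAt)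
      (fun t _ => (hasDerivAt_gB n t).differentiableAt.differentiableWithinAt)
    intro t ht
    rw [interior_Icc] at ht
    rw [(hasDerivAt_gB n t).deriv]
    have := key_ineq n (le_of_lt ht.1) (le_of_lt ht.2)
    nlinarith
  have := hanti (Set.mem_Icc.mpr ⟨hs0, hs1⟩) (Set.mem_Icc.mpr ⟨zero_le_one, le_refl 1⟩) hs1
  rw [gB_one] at this
  linarith

noncomputable def gQ (n : ℕ) (x : ℝ) : ℝ :=
  ∑ i ∈ range (n+1), (-1:ℝ)^i * (n.choose i : ℝ) * x^i / (2*(i:ℝ)+1)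

noncomputable def gSE (n : ℕ) (x : ℝ) : ℝ :=
  ∑ j ∈ Icc 2 (n+1), (-1:ℝ)^j * ((n+1).choose j : ℝ) / (2*(j:ℝ)-1) *
    ∑ i ∈ range (j-1), ((j:ℝ)-1-(i:ℝ)) * x^i

lemma alt_binom (N : ℕ) (hN : 1 ≤ N) :
    ∑ j ∈ range (N+1), (-1:ℝ)^j * (N.choose j : ℝ) = 0 := by
  have h := binom_x N 1
  simp only [sub_self] at h
  rw [zero_pow (by omega : N ≠ 0)] at h
  rw [← h]
  exact Finset.sum_congr rfl fun j _ => by ring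

-- P(x) = -(1-x)^{n+1} - 2(n+1) x Q(x)
lemma P_eq (n : ℕ) (x : ℝ) :
    ∑ j ∈ range (n+2), (-1:ℝ)^j * ((n+1).choose j : ℝ) * x^j / (2*(j:ℝ)-1)
      = -(1-x)^(n+1) - 2*((n:ℝ)+1)*x*gQ n x := by
  have hb : (1-x)^(n+1)
      = ∑ i ∈ range (n+1), ((n+1).choose (i+1) : ℝ) * (-x)^(i+1) + 1 := by
    rw [← binom_x (n+1) x, Finset.sum_range_succ']
    norm_num
  have hterm : ∀ i : ℕ,
      (-1:ℝ)^(i+1) * ((n+1).choose (i+1) : ℝ) * x^(i+1) / (2*((i+1:ℕ):ℝ)-1)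
      = -(((n+1).choose (i+1) : ℝ) * (-x)^(i+1))
        - (2*((n:ℝ)+1)*x) * ((-1:ℝ)^i * (n.choose i : ℝ) * x^i / (2*(i:ℝ)+1)) := by
    intro i
    have hch : ((n:ℝ)+1) * (n.choose i : ℝ) = ((i:ℝ)+1) * ((n+1).choose (i+1) : ℝ) := by
      have h2 : ((n.succ * n.choose i : ℕ) : ℝ) = (((n+1).choose (i+1) * (i+1) : ℕ) : ℝ) :=
        congrArg _ (Nat.add_one_mul_choose_eq n i)
      push_cast at h2
      linarith
    have hd : (2*(i:ℝ)+1) ≠ 0 := by positivity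
    have hxp : (-x)^(i+1) = (-1:ℝ)^(i+1) * x^(i+1) := by rw [neg_pow]
    push_cast
    rw [hxp, show 2*((i:ℝ)+1)-1 = 2*(i:ℝ)+1 by ring]
    field_simp
    linear_combination (2*(-1:ℝ)^i*x^(i+1)) * hch
  have h1 : ∑ j ∈ range (n+2), (-1:ℝ)^j * ((n+1).choose j : ℝ) * x^j / (2*(j:ℝ)-1)
      = (∑ i ∈ range (n+1),
          (-1:ℝ)^(i+1) * ((n+1).choose (i+1) : ℝ) * x^(i+1) / (2*((i+1:ℕ):ℝ)-1))
        + (-1:ℝ)^0 * ((n+1).choose 0 : ℝ) * x^0 / (2*((0:ℕ):ℝ)-1) :=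
    Finset.sum_range_succ' _ _
  rw [h1, Finset.sum_congr rfl fun i _ => hterm i, Finset.sum_sub_distrib,
    Finset.sum_neg_distrib, ← Finset.mul_sum, hb, gQ]
  norm_num
  ring

lemma hden (j : ℕ) : (2*(j:ℝ)-1) ≠ 0 := by
  rcases Nat.eq_zero_or_pos j with h | h
  · subst h; norm_num
  · have : (1:ℝ) ≤ (j:ℝ) := by exact_mod_cast h
    intro hc; nlinarith

lemma S1_eq (n : ℕ) :
    ∑ j ∈ range (n+2), (-1:ℝ)^j * ((n+1).choose j : ℝ) / (2*(j:ℝ)-1)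
      = -2*((n:ℝ)+1)*gQ n 1 := by
  have h2 : ∑ j ∈ range (n+2), (-1:ℝ)^j * ((n+1).choose j : ℝ) / (2*(j:ℝ)-1)
      = ∑ j ∈ range (n+2), (-1:ℝ)^j * ((n+1).choose j : ℝ) * 1^j / (2*(j:ℝ)-1) :=
    Finset.sum_congr rfl fun j _ => by rw [one_pow, mul_one]
  rw [h2, P_eq n 1, sub_self, zero_pow (by omega : n+1 ≠ 0)]
  ring

lemma Sj_eq (n : ℕ) :
    ∑ j ∈ range (n+2), (-1:ℝ)^j * ((n+1).choose j : ℝ) * (j:ℝ) / (2*(j:ℝ)-1)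
      = -((n:ℝ)+1)*gQ n 1 := by
  have hsplit : ∀ j : ℕ, (-1:ℝ)^j * ((n+1).choose j : ℝ) * (j:ℝ) / (2*(j:ℝ)-1)
      = (1/2) * ((-1:ℝ)^j * ((n+1).choose j : ℝ))
        + (1/2) * ((-1:ℝ)^j * ((n+1).choose j : ℝ) / (2*(j:ℝ)-1)) := by
    intro j
    have := hden j
    rw [div_eq_iff this, add_mul, mul_assoc (1/2) ((-1:ℝ)^j * ((n+1).choose j : ℝ) / (2*(j:ℝ)-1)), div_mul_cancel₀ _ this]
    ring
  rw [Finset.sum_congr rfl fun j _ => hsplit j, Finset.sum_add_distrib,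
    ← Finset.mul_sum, ← Finset.mul_sum, alt_binom (n+1) (by omega), S1_eq]
  ring

lemma A_eq (n : ℕ) (x : ℝ) :
    ∑ j ∈ range (n+2),
        (-1:ℝ)^j * ((n+1).choose j : ℝ) * (x^j - (j:ℝ)*x + ((j:ℝ)-1)) / (2*(j:ℝ)-1)
      = ((n:ℝ)+1)*((1+x)*gQ n 1 - 2*x*gQ n x) - (1-x)^(n+1) := by
  have hsplit : ∀ j : ℕ,
      (-1:ℝ)^j * ((n+1).choose j : ℝ) * (x^j - (j:ℝ)*x + ((j:ℝ)-1)) / (2*(j:ℝ)-1)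
      = (-1:ℝ)^j * ((n+1).choose j : ℝ) * x^j / (2*(j:ℝ)-1)
        - x * ((-1:ℝ)^j * ((n+1).choose j : ℝ) * (j:ℝ) / (2*(j:ℝ)-1))
        + ((-1:ℝ)^j * ((n+1).choose j : ℝ) * (j:ℝ) / (2*(j:ℝ)-1)
            - (-1:ℝ)^j * ((n+1).choose j : ℝ) / (2*(j:ℝ)-1)) := by
    intro j
    have := hden j
    field_simp
  rw [Finset.sum_congr rfl fun j _ => hsplit j, Finset.sum_add_distrib,
    Finset.sum_sub_distrib, Finset.sum_sub_distrib, ← Finset.mul_sum,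
    P_eq, Sj_eq, S1_eq]
  ring

lemma fact_x (m : ℕ) (x : ℝ) :
    (1-x)^2 * ∑ i ∈ range m, ((m:ℝ)-(i:ℝ))*x^i
      = x^(m+1) - ((m:ℝ)+1)*x + (m:ℝ) := by
  induction m with
  | zero => simp
  | succ m ih =>
    have hg : (∑ i ∈ range (m+1), x^i) * (x-1) = x^(m+1) - 1 := geom_sum_mul x (m+1)
    have h2 : ∑ i ∈ range (m+1), ((m:ℝ)-(i:ℝ))*x^i
        = ∑ i ∈ range m, ((m:ℝ)-(i:ℝ))*x^i := by
      rw [Finset.sum_range_succ]; simp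
    have h3 : ∑ i ∈ range (m+1), ((↑(m+1):ℝ)-(i:ℝ))*x^i
        = (∑ i ∈ range m, ((m:ℝ)-(i:ℝ))*x^i) + ∑ i ∈ range (m+1), x^i := by
      rw [← h2, ← Finset.sum_add_distrib]
      refine Finset.sum_congr rfl fun i _ => by push_cast; ring
    rw [h3, mul_add, ih]
    push_cast
    linear_combination (x-1) * hg

lemma SE_id (n : ℕ) (hn : 1 ≤ n) (x : ℝ) :
    (1-x)^2 * gSE n x
      = ((n:ℝ)+1)*((1+x)*gQ n 1 - 2*x*gQ n x) - (1-x)^(n+1) := by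
  rw [← A_eq n x, gSE, Finset.mul_sum]
  have hterm : ∀ j ∈ Icc 2 (n+1),
      (1-x)^2 * ((-1:ℝ)^j * ((n+1).choose j : ℝ) / (2*(j:ℝ)-1) *
        ∑ i ∈ range (j-1), ((j:ℝ)-1-(i:ℝ)) * x^i)
      = (-1:ℝ)^j * ((n+1).choose j : ℝ) * (x^j - (j:ℝ)*x + ((j:ℝ)-1)) / (2*(j:ℝ)-1) := by
    intro j hj
    rw [Finset.mem_Icc] at hj
    have hj1 : 1 ≤ j := by omega
    have hcast : ((j-1:ℕ):ℝ) = (j:ℝ)-1 := by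
      rw [Nat.cast_sub hj1]; norm_num
    have hfx := fact_x (j-1) x
    rw [hcast] at hfx
    have hpow : (j-1)+1 = j := by omega
    rw [hpow] at hfx
    have hinner : ∑ i ∈ range (j-1), ((j:ℝ)-1-(i:ℝ)) * x^i
        = ∑ i ∈ range (j-1), (((j:ℝ)-1)-(i:ℝ)) * x^i := by norm_num
    rw [hinner]
    rw [mul_comm ((-1:ℝ)^j * ((n+1).choose j : ℝ) / (2*(j:ℝ)-1)) _, ← mul_assoc, hfx]
    have := hden j
    field_simp
    ring
  rw [Finset.sum_congr rfl hterm]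
  have hr : range (n+2) = insert 0 (insert 1 (Icc 2 (n+1))) := by
    ext a
    simp only [Finset.mem_range, Finset.mem_insert, Finset.mem_Icc]
    omega
  rw [hr, Finset.sum_insert (by simp), Finset.sum_insert (by simp [Finset.mem_Icc])]
  norm_num

lemma gSE_nonneg_lt (n : ℕ) (hn : 1 ≤ n) {x : ℝ} (hx0 : 0 ≤ x) (hx1 : x < 1) :
    0 ≤ gSE n x := by
  set s := Real.sqrt x with hs
  have hs0 : 0 ≤ s := Real.sqrt_nonneg x
  have hs1 : s ≤ 1 := by
    rw [hs, show (1:ℝ) = Real.sqrt 1 by simp]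
    exact Real.sqrt_le_sqrt (le_of_lt hx1)
  have hsq : s^2 = x := Real.sq_sqrt hx0
  have hB := gB_nonneg n hs0 hs1
  have hIp1 : gIp n 1 = gQ n 1 := by
    unfold gIp gQ
    exact Finset.sum_congr rfl fun i _ => by rw [one_pow, one_pow]
  have hIps : s * gIp n s = x * gQ n x := by
    unfold gIp gQ
    rw [Finset.mul_sum, Finset.mul_sum]
    refine Finset.sum_congr rfl fun i _ => ?_
    rw [← hsq]
    ring
  have hBx : gB n s = ((n:ℝ)+1)*((1+x)*gQ n 1 - 2*x*gQ n x) - (1-x)^(n+1) := by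
    unfold gB
    rw [hsq, hIp1, show 2*s*gIp n s = 2*(s * gIp n s) by ring, hIps]
    ring
  rw [hBx, ← SE_id n hn x] at hB
  have hpos : 0 < (1-x)^2 := pow_pos (by linarith) 2
  nlinarith

lemma gSE_cont (n : ℕ) : Continuous (gSE n) := by
  unfold gSE
  exact continuous_finset_sum _ fun j _ =>
    continuous_const.mul (continuous_finset_sum _ fun i _ =>
      continuous_const.mul (continuous_pow i))

lemma gSE_nonneg (n : ℕ) (hn : 1 ≤ n) {x : ℝ} (hx0 : 0 ≤ x) (hx1 : x ≤ 1) :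
    0 ≤ gSE n x := by
  rcases lt_or_eq_of_le hx1 with h | h
  · exact gSE_nonneg_lt n hn hx0 h
  · subst h
    have hne : (nhdsWithin (1:ℝ) (Set.Ico (0:ℝ) 1)).NeBot := by
      rw [← mem_closure_iff_nhdsWithin_neBot, closure_Ico (by norm_num : (0:ℝ) ≠ 1)]
      exact Set.right_mem_Icc.mpr zero_le_one
    have ht : Filter.Tendsto (gSE n) (nhdsWithin (1:ℝ) (Set.Ico (0:ℝ) 1))
        (nhds (gSE n 1)) :=
      ((gSE_cont n).continuousAt).tendsto.mono_left nhdsWithin_le_nhds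
    refine ge_of_tendsto ht (Filter.eventually_of_mem self_mem_nhdsWithin fun y hy => ?_)
    have hy' : y ∈ Set.Ico (0:ℝ) 1 := hy
    exact gSE_nonneg_lt n hn hy'.1 hy'.2

lemma geo_id (m : ℕ) (u : ℝ) :
    2 * ∑ l ∈ range (2*m+3), u^l - u^(2*m+2) - 1
      = (1+u)^2 * ∑ i ∈ range (m+1), u^(2*i) := by
  induction m with
  | zero =>
    simp [Finset.sum_range_succ]
    ring
  | succ m ih =>
    rw [show 2*(m+1)+3 = (2*m+3)+1+1 by ring, Finset.sum_range_succ, Finset.sum_range_succ,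
      Finset.sum_range_succ (fun i => u^(2*i)) (m+1)]
    have e1 : (2*m+3)+1 = 2*m+4 := by ring
    have e2 : 2*(m+1)+2 = 2*m+4 := by ring
    have e3 : 2*(m+1) = 2*m+2 := by ring
    rw [e1, e2, e3]
    linear_combination ih

lemma gfact (m : ℕ) (u : ℝ) :
    (∑ l ∈ range (2*m+1), (2*(m:ℝ)+1-(l:ℝ))*u^l) - ((m:ℝ)+1)
      = (1+u)^2 * ∑ i ∈ range m, ((m:ℝ)-(i:ℝ))*u^(2*i) := by
  induction m with
  | zero => simp
  | succ m ih =>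
    have h1 : ∑ l ∈ range (2*(m+1)+1), (2*((m+1:ℕ):ℝ)+1-(l:ℝ))*u^l
        = (∑ l ∈ range (2*m+1), (2*(m:ℝ)+1-(l:ℝ))*u^l) - u^(2*m+2)
          + 2 * ∑ l ∈ range (2*m+3), u^l := by
      have e : 2*(m+1)+1 = (2*m+1)+1+1 := by ring
      rw [e, Finset.sum_range_succ, Finset.sum_range_succ]
      have hsplit : ∑ l ∈ range (2*m+1), (2*((m+1:ℕ):ℝ)+1-(l:ℝ))*u^l
          = ∑ l ∈ range (2*m+1), ((2*(m:ℝ)+1-(l:ℝ))*u^l + 2*u^l) := by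
        refine Finset.sum_congr rfl fun l _ => by push_cast; ring
      rw [hsplit, Finset.sum_add_distrib]
      have e2 : (2*m+1)+1 = 2*m+2 := by ring
      have hg : ∑ l ∈ range (2*m+3), u^l
          = (∑ l ∈ range (2*m+1), u^l) + u^(2*m+1) + u^(2*m+2) := by
        rw [show 2*m+3 = (2*m+1)+1+1 by ring, Finset.sum_range_succ, Finset.sum_range_succ]
      rw [e2, hg, ← Finset.mul_sum]
      push_cast
      ring
    have h2 : ∑ i ∈ range (m+1), (((m+1:ℕ):ℝ)-(i:ℝ))*u^(2*i)
        = (∑ i ∈ range m, ((m:ℝ)-(i:ℝ))*u^(2*i)) + ∑ i ∈ range (m+1), u^(2*i) := by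
      have : ∑ i ∈ range (m+1), (((m+1:ℕ):ℝ)-(i:ℝ))*u^(2*i)
          = ∑ i ∈ range (m+1), (((m:ℝ)-(i:ℝ))*u^(2*i) + u^(2*i)) := by
        refine Finset.sum_congr rfl fun i _ => by push_cast; ring
      rw [this, Finset.sum_add_distrib, Finset.sum_range_succ _ m]
      simp
    rw [h1, h2, mul_add, ← ih]
    have := geo_id m u
    push_cast
    linear_combination this


lemma alt_Icc (n : ℕ) :
    ∑ j ∈ Icc 1 (n+1), (-1:ℝ)^(j+1) * ((n+1).choose j : ℝ) = 1 := by
  have h := alt_binom (n+1) (by omega)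
  have hr : range (n+2) = insert 0 (Icc 1 (n+1)) := by
    ext a
    simp only [Finset.mem_range, Finset.mem_insert, Finset.mem_Icc]
    omega
  rw [hr, Finset.sum_insert (by simp)] at h
  norm_num at h
  have : ∑ j ∈ Icc 1 (n+1), (-1:ℝ)^(j+1) * ((n+1).choose j : ℝ)
      = -∑ j ∈ Icc 1 (n+1), (-1:ℝ)^j * ((n+1).choose j : ℝ) := by
    rw [← Finset.sum_neg_distrib]
    refine Finset.sum_congr rfl fun j _ => by rw [pow_succ]; ring
  rw [this]
  linarith

lemma c1_eq (n : ℕ) :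
    gmchC n 1 = ∑ j ∈ Icc 1 (n+1),
      (-1:ℝ)^(j+1) * ((2*(j:ℝ)-2) / (2*(j:ℝ)-1)) * ((n+1).choose j : ℝ) := by
  rw [gmchC, if_pos rfl]
  have hterm : ∀ j ∈ Icc 1 (n+1),
      (-1:ℝ)^(j+1) * ((2*(j:ℝ)-2) / (2*(j:ℝ)-1)) * ((n+1).choose j : ℝ)
      = (-1:ℝ)^(j+1) * ((2*(j:ℝ)-3) / (2*(2*(j:ℝ)-1))) * ((n+1).choose j : ℝ)
        + (1/2) * ((-1:ℝ)^(j+1) * ((n+1).choose j : ℝ)) := by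
    intro j _
    have := hden j
    field_simp
    ring
  rw [Finset.sum_congr rfl hterm, Finset.sum_add_distrib, ← Finset.mul_sum, alt_Icc]
  ring

lemma main_id (n : ℕ) (hn : 2 ≤ n) (u : ℝ) :
    gmchC n 1 / 2 + (∑ k ∈ Icc 1 (2*n-1), gmchC n k * u^k)
      + (-1:ℝ)^n * u^(2*n) / (2*(n:ℝ)+1)
    = -((1+u)^2 * gSE n (u^2)) := by
  set A : ℕ → ℝ := fun j => (-1:ℝ)^(j+1) * ((n+1).choose j : ℝ) / (2*(j:ℝ)-1) with hA
  have hins1 : Icc 1 (n+1) = insert 1 (Icc 2 (n+1)) := by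
    ext a; simp only [Finset.mem_Icc, Finset.mem_insert]; omega
  -- T = RHS
  have hT_rhs : ∑ j ∈ Icc 1 (n+1),
      A j * ((∑ l ∈ range (2*j-1), (2*(j:ℝ)-1-(l:ℝ))*u^l) - (j:ℝ))
      = -((1+u)^2 * gSE n (u^2)) := by
    have hterm : ∀ j ∈ Icc 1 (n+1),
        A j * ((∑ l ∈ range (2*j-1), (2*(j:ℝ)-1-(l:ℝ))*u^l) - (j:ℝ))
        = -((1+u)^2 * ((-1:ℝ)^j * ((n+1).choose j : ℝ) / (2*(j:ℝ)-1) *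
            ∑ i ∈ range (j-1), ((j:ℝ)-1-(i:ℝ)) * (u^2)^i)) := by
      intro j hj
      rw [Finset.mem_Icc] at hj
      obtain ⟨hj1, _⟩ := hj
      have hm := gfact (j-1) u
      have hc : ((j-1:ℕ):ℝ) = (j:ℝ)-1 := by
        rw [Nat.cast_sub hj1]; norm_num
      rw [hc, show 2*(j-1)+1 = 2*j-1 by omega,
        show ((j:ℝ)-1)+1 = (j:ℝ) by ring] at hm
      have hs1 : ∑ l ∈ range (2*j-1), (2*(j:ℝ)-1-(l:ℝ))*u^l
          = ∑ l ∈ range (2*j-1), (2*((j:ℝ)-1)+1-(l:ℝ))*u^l :=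
        Finset.sum_congr rfl fun l _ => by ring
      have hs2 : ∑ i ∈ range (j-1), ((j:ℝ)-1-(i:ℝ)) * (u^2)^i
          = ∑ i ∈ range (j-1), ((j:ℝ)-1-(i:ℝ))*u^(2*i) :=
        Finset.sum_congr rfl fun i _ => by rw [pow_mul]
      rw [hs1, hm, hs2, hA]
      have := hden j
      field_simp
      ring
    rw [Finset.sum_congr rfl hterm, Finset.sum_neg_distrib]
    rw [hins1, Finset.sum_insert (by simp [Finset.mem_Icc])]
    rw [gSE, Finset.mul_sum]
    norm_num [Finset.mul_sum]
  -- T = LHS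
  have hAj : ∑ j ∈ Icc 1 (n+1), A j * (j:ℝ) = 1 - gmchC n 1 / 2 := by
    have hterm : ∀ j ∈ Icc 1 (n+1), A j * (j:ℝ)
        = (-1:ℝ)^(j+1) * ((n+1).choose j : ℝ)
          - (1/2) * ((-1:ℝ)^(j+1) * ((2*(j:ℝ)-2) / (2*(j:ℝ)-1)) * ((n+1).choose j : ℝ)) := by
      intro j _
      have := hden j
      rw [hA]
      field_simp
      ring
    rw [Finset.sum_congr rfl hterm, Finset.sum_sub_distrib, ← Finset.mul_sum,
      alt_Icc, ← c1_eq]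
    ring
  have hguard : ∀ j ∈ Icc 1 (n+1),
      A j * ((∑ l ∈ range (2*j-1), (2*(j:ℝ)-1-(l:ℝ))*u^l))
      = ∑ l ∈ range (2*n+1), (if l+2 ≤ 2*j then A j * ((2*(j:ℝ)-1-(l:ℝ))*u^l) else 0) := by
    intro j hj
    rw [Finset.mem_Icc] at hj
    have hfil : Finset.filter (fun l => l+2 ≤ 2*j) (range (2*n+1)) = range (2*j-1) := by
      ext a
      simp only [Finset.mem_filter, Finset.mem_range]
      omega
    rw [← Finset.sum_filter, hfil, Finset.mul_sum]
  have hS : ∑ j ∈ Icc 1 (n+1),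
      A j * ((∑ l ∈ range (2*j-1), (2*(j:ℝ)-1-(l:ℝ))*u^l))
      = 1 + (∑ k ∈ Icc 1 (2*n-1), gmchC n k * u^k)
        + (-1:ℝ)^n * u^(2*n) / (2*(n:ℝ)+1) := by
    rw [Finset.sum_congr rfl hguard, Finset.sum_comm]
    have hsplit : range (2*n+1) = insert 0 (insert (2*n) (Icc 1 (2*n-1))) := by
      ext a
      simp only [Finset.mem_range, Finset.mem_insert, Finset.mem_Icc]
      omega
    rw [hsplit, Finset.sum_insert (by simp only [Finset.mem_insert, Finset.mem_Icc]; omega),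
      Finset.sum_insert (by simp only [Finset.mem_Icc]; omega)]
    have h0 : ∑ j ∈ Icc 1 (n+1), (if (0:ℕ)+2 ≤ 2*j then A j * ((2*(j:ℝ)-1-((0:ℕ):ℝ))*u^(0:ℕ)) else 0)
        = 1 := by
      have : ∀ j ∈ Icc 1 (n+1),
          (if (0:ℕ)+2 ≤ 2*j then A j * ((2*(j:ℝ)-1-((0:ℕ):ℝ))*u^(0:ℕ)) else 0)
          = (-1:ℝ)^(j+1) * ((n+1).choose j : ℝ) := by
        intro j hj
        rw [Finset.mem_Icc] at hj
        rw [if_pos (by omega), hA]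
        have := hden j
        field_simp; simp
      rw [Finset.sum_congr rfl this, alt_Icc]
    have h2n : ∑ j ∈ Icc 1 (n+1), (if (2*n)+2 ≤ 2*j then A j * ((2*(j:ℝ)-1-((2*n:ℕ):ℝ))*u^(2*n)) else 0)
        = (-1:ℝ)^n * u^(2*n) / (2*(n:ℝ)+1) := by
      have hfil2 : Finset.filter (fun j => (2*n)+2 ≤ 2*j) (Icc 1 (n+1)) = {n+1} := by
        ext a
        simp only [Finset.mem_filter, Finset.mem_Icc, Finset.mem_singleton]
        omega
      rw [← Finset.sum_filter, hfil2, Finset.sum_singleton, hA]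
      simp only [Nat.choose_self, Nat.cast_one]
      have hsgn : (-1:ℝ)^(n+1+1) = (-1)^n := by
        rw [pow_succ, pow_succ]; ring
      have hd : (2*((n:ℝ)+1)-1) ≠ 0 := by
        have : (0:ℝ) ≤ (n:ℝ) := Nat.cast_nonneg n
        intro h; nlinarith
      push_cast
      rw [hsgn]
      field_simp
      ring
    have hmid : ∀ l ∈ Icc 1 (2*n-1),
        (∑ j ∈ Icc 1 (n+1), (if l+2 ≤ 2*j then A j * ((2*(j:ℝ)-1-(l:ℝ))*u^l) else 0))
        = gmchC n l * u^l := by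
      intro l hl
      rw [Finset.mem_Icc] at hl
      have hfil : Finset.filter (fun j => l+2 ≤ 2*j) (Icc 1 (n+1)) = Icc ((l+1)/2+1) (n+1) := by
        ext a
        simp only [Finset.mem_filter, Finset.mem_Icc]
        omega
      rw [← Finset.sum_filter, hfil]
      by_cases hl1 : l = 1
      · subst hl1
        rw [c1_eq, show (1+1)/2+1 = 2 from rfl]
        rw [hins1, Finset.sum_insert (by simp [Finset.mem_Icc]), add_mul, Finset.sum_mul]
        have hz : ((-1:ℝ)^(1+1) * ((2*((1:ℕ):ℝ)-2) / (2*((1:ℕ):ℝ)-1)) * ((n+1).choose 1 : ℝ)) * u^1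
            = 0 := by norm_num
        rw [hz, zero_add]
        refine Finset.sum_congr rfl fun j hj => ?_
        rw [hA]
        have := hden j
        field_simp
        ring
      · rw [gmchC, if_neg hl1, Finset.sum_mul]
        refine Finset.sum_congr rfl fun j hj => ?_
        rw [hA]
        have := hden j
        field_simp
        ring
    rw [h0, h2n, Finset.sum_congr rfl hmid]
    ring
  have hexp : ∑ j ∈ Icc 1 (n+1),
      A j * ((∑ l ∈ range (2*j-1), (2*(j:ℝ)-1-(l:ℝ))*u^l) - (j:ℝ))
      = (∑ j ∈ Icc 1 (n+1), A j * ((∑ l ∈ range (2*j-1), (2*(j:ℝ)-1-(l:ℝ))*u^l)))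
        - ∑ j ∈ Icc 1 (n+1), A j * (j:ℝ) := by
    rw [← Finset.sum_sub_distrib]
    exact Finset.sum_congr rfl fun j _ => by ring
  rw [← hT_rhs, hexp, hS, hAj]
  ring


/-- the key estimate (3.10)/(3.11). For an integer `n ≥ 2` and the
coefficients `c_k` as defined, for all real `p`, `q` with `0 ≤ p` and `|q| ≤ p`:
`p^{2n} + Σ_{k=1}^{2n−1} c_k·p^{2n−k}·q^k + (−1)^n·q^{2n}/(2n+1) ≤ ((2 − c₁)/2)·p^{2n}`. -/
theorem stmt10 (n : ℕ) (hn : 2 ≤ n) (p q : ℝ) (hp : 0 ≤ p) (hq : |q| ≤ p) :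
    p ^ (2 * n) + (∑ k ∈ Finset.Icc 1 (2 * n - 1), gmchC n k * p ^ (2 * n - k) * q ^ k) +
        (-1 : ℝ) ^ n * q ^ (2 * n) / (2 * (n : ℝ) + 1) ≤
      ((2 - gmchC n 1) / 2) * p ^ (2 * n) := by
  rcases eq_or_lt_of_le hp with h0 | hppos
  · have hp0 : p = 0 := h0.symm
    have hq0 : q = 0 := by
      have h1 : |q| ≤ 0 := hp0 ▸ hq
      have := abs_nonneg q
      exact abs_eq_zero.mp (le_antisymm h1 this)
    subst hp0
    subst hq0
    have h2n0 : (0:ℝ)^(2*n) = 0 := zero_pow (by omega)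
    rw [h2n0]
    have hsz : ∑ k ∈ Icc 1 (2*n-1), gmchC n k * (0:ℝ)^(2*n-k) * (0:ℝ)^k = 0 :=
      Finset.sum_eq_zero fun k hk => by
        rw [Finset.mem_Icc] at hk
        rw [zero_pow (by omega : k ≠ 0)]
        ring
    rw [hsz]
    norm_num
  · set u := q / p with hu
    have hq' : q = u * p := by
      rw [hu]; field_simp
    have hu1 : |u| ≤ 1 := by
      rw [hu, abs_div, abs_of_pos hppos]
      exact div_le_one_of_le₀ hq (le_of_lt hppos)
    have husq : u^2 ≤ 1 := by
      have := sq_abs u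
      nlinarith [abs_nonneg u]
    have hkey : gmchC n 1 / 2 + (∑ k ∈ Icc 1 (2*n-1), gmchC n k * u^k)
        + (-1:ℝ)^n * u^(2*n) / (2*(n:ℝ)+1) ≤ 0 := by
      rw [main_id n hn u]
      have h1 : 0 ≤ gSE n (u^2) := gSE_nonneg n (by omega) (sq_nonneg u) husq
      nlinarith [sq_nonneg (1+u)]
    have hppow : (0:ℝ) < p^(2*n) := pow_pos hppos _
    have hsum : ∑ k ∈ Icc 1 (2*n-1), gmchC n k * p^(2*n-k) * q^k
        = p^(2*n) * ∑ k ∈ Icc 1 (2*n-1), gmchC n k * u^k := by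
      rw [Finset.mul_sum]
      refine Finset.sum_congr rfl fun k hk => ?_
      rw [Finset.mem_Icc] at hk
      have hpk : p^(2*n-k) * p^k = p^(2*n) := by
        rw [← pow_add]
        congr 1
        omega
      calc gmchC n k * p^(2*n-k) * q^k
          = gmchC n k * u^k * (p^(2*n-k) * p^k) := by rw [hq', mul_pow]; ring
        _ = p^(2*n) * (gmchC n k * u^k) := by rw [hpk]; ring
    have hq2n : q^(2*n) = p^(2*n) * u^(2*n) := by rw [hq', mul_pow]; ring
    rw [hsum, hq2n]
    have hfin : (1:ℝ) + (∑ k ∈ Icc 1 (2*n-1), gmchC n k * u^k)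
        + (-1:ℝ)^n * u^(2*n) / (2*(n:ℝ)+1) ≤ (2 - gmchC n 1)/2 := by linarith
    calc p^(2*n) + p^(2*n) * (∑ k ∈ Icc 1 (2*n-1), gmchC n k * u^k)
          + (-1:ℝ)^n * (p^(2*n) * u^(2*n)) / (2*(n:ℝ)+1)
        = p^(2*n) * ((1:ℝ) + (∑ k ∈ Icc 1 (2*n-1), gmchC n k * u^k)
            + (-1:ℝ)^n * u^(2*n) / (2*(n:ℝ)+1)) := by ring
      _ ≤ p^(2*n) * ((2 - gmchC n 1)/2) := mul_le_mul_of_nonneg_left hfin (le_of_lt hppow)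
      _ = ((2 - gmchC n 1) / 2) * p^(2*n) := by ring
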